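/- arXiv:1811.05009 — 2 statements merged into one kernel-verified Lean document; each statement's English description precedes it below -/
import Mathlib

section
/- Let V be a normed space and let f : ℕ → ℝ≥0 be a function (thought of as ℓ ↦ |u|_{ℓ,p}) satisfying f(1) ≤ ε·f(2) + 2ν·ε⁻¹·f(0) for all ε ∈ (0,1] in the shifted sense: for every ℓ ≥ 1 and every ε > 0, f(ℓ) ≤ ε·f(ℓ+1) + 2ν·ε⁻¹·f(ℓ−1). Then for every m ≥ 2 there is a constant C(ν,m) such that for every ℓ ≤ m−1 and every ε ∈ (0,1], f(ℓ) ≤ ε^{m−ℓ}·f(m) + C(ν,m)·ε^{−ℓ}·f(0). -/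
open scoped NNReal

/-- Pure real-number core of the iteration step. -/
lemma stmt0_aux (e n c X Q a b d g : ℝ) (he : 0 < e) (hn : 1 ≤ n)
    (hc : 0 ≤ c) (hX : 0 ≤ X) (hQ : 0 ≤ Q) (hb : 0 ≤ b) (hg : 0 ≤ g)
    (H1 : a ≤ e / (4 * n) * b + (8 * n ^ 2 * e⁻¹) * d)
    (H2 : d ≤ e / (16 * n ^ 2) * a + (c * (X * Q)) * g) :
    a ≤ 2 * e * b + 2 * (8 * n ^ 2 * c * X) * (e⁻¹ * Q) * g := by
  have hn0 : (0 : ℝ) < n := lt_of_lt_of_le one_pos hn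
  have hcoef : (0 : ℝ) ≤ 8 * n ^ 2 * e⁻¹ := by positivity
  have key : a ≤ e / (4 * n) * b + a / 2 + 8 * n ^ 2 * c * X * (e⁻¹ * Q) * g := by
    calc a ≤ e / (4 * n) * b + (8 * n ^ 2 * e⁻¹) * d := H1
      _ ≤ e / (4 * n) * b + (8 * n ^ 2 * e⁻¹) * (e / (16 * n ^ 2) * a + (c * (X * Q)) * g) := by
          gcongr
      _ = e / (4 * n) * b + a / 2 + 8 * n ^ 2 * c * X * (e⁻¹ * Q) * g := by
          field_simp
          ring
  have he4 : e / (4 * n) ≤ e := by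
    apply div_le_self he.le
    linarith
  have h5 : e / (4 * n) * b ≤ e * b := mul_le_mul_of_nonneg_right he4 hb
  nlinarith [key, h5]

/-- Abstract numerical core of the Nash ε-type inequality (Lemma 2.1):
if `f : ℕ → ℝ≥0` satisfies the three-term ε-interpolation recursion
`f ℓ ≤ ε * f (ℓ+1) + 2ν ε⁻¹ * f (ℓ-1)` for all `ℓ ≥ 1` and all `ε > 0`,
then for every `m ≥ 2` there is `C = C(ν,m)` with
`f ℓ ≤ ε^(m-ℓ) * f m + C * ε⁻ℓ * f 0` for all `ℓ ≤ m-1` and `ε ∈ (0,1]`. -/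
theorem stmt0 (ν : ℝ≥0) (hν : 1 ≤ ν) (f : ℕ → ℝ≥0)
    (hrec : ∀ ℓ : ℕ, 1 ≤ ℓ → ∀ ε : ℝ≥0, 0 < ε →
      f ℓ ≤ ε * f (ℓ + 1) + 2 * ν * ε⁻¹ * f (ℓ - 1)) :
    ∀ m : ℕ, 2 ≤ m → ∃ C : ℝ≥0, 0 < C ∧
      ∀ ℓ : ℕ, ℓ ≤ m - 1 → ∀ ε : ℝ≥0, 0 < ε → ε ≤ 1 →
        f ℓ ≤ ε ^ (m - ℓ) * f m + C * (ε⁻¹) ^ ℓ * f 0 := by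
  have hν0 : (0 : ℝ≥0) < ν := lt_of_lt_of_le one_pos hν
  intro m hm
  induction m, hm using Nat.le_induction with
  | base =>
      refine ⟨2 * ν, by positivity, ?_⟩
      intro ℓ hℓ ε hε hε1
      have hℓ1 : ℓ ≤ 1 := by omega
      interval_cases ℓ
      · -- ℓ = 0
        have h1 : f 0 ≤ 2 * ν * f 0 :=
          le_mul_of_one_le_left zero_le (by
            calc (1 : ℝ≥0) ≤ ν := hν
              _ ≤ 2 * ν := le_mul_of_one_le_left zero_le one_le_two)
        calc f 0 ≤ 2 * ν * f 0 := h1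
          _ ≤ ε ^ (2 - 0) * f 2 + 2 * ν * f 0 := le_add_self
          _ = ε ^ (2 - 0) * f 2 + 2 * ν * (ε⁻¹) ^ 0 * f 0 := by simp
      · -- ℓ = 1
        simpa using hrec 1 le_rfl ε hε
  | succ m hm IH =>
      obtain ⟨C, hC, hIH⟩ := IH
      set K : ℝ≥0 := 8 * ν ^ 2 * C * (16 * ν ^ 2) ^ (m - 1) with hK
      have hKpos : 0 < K := by positivity
      -- Sublemma A
      have subA : ∀ ε : ℝ≥0, 0 < ε → ε ≤ 1 →
          f m ≤ 2 * ε * f (m + 1) + 2 * K * (ε⁻¹) ^ m * f 0 := by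
        intro ε hε hε1
        have h16 : (1 : ℝ≥0) ≤ 16 * ν ^ 2 := by
          calc (1 : ℝ≥0) ≤ ν ^ 2 := one_le_pow_of_one_le' hν 2
            _ ≤ 16 * ν ^ 2 := le_mul_of_one_le_left zero_le (by norm_num)
        have h1 := hrec m (by omega) (ε / (4 * ν)) (by positivity)
        have h2 := hIH (m - 1) le_rfl (ε / (16 * ν ^ 2))
          (by positivity)
          (le_trans (div_le_self zero_le h16) hε1)
        rw [show m - (m - 1) = 1 by omega, pow_one] at h2
        -- pass to reals
        have H1 : (f m : ℝ) ≤ (ε : ℝ) / (4 * ν) * f (m + 1)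
            + (8 * (ν : ℝ) ^ 2 * (ε : ℝ)⁻¹) * f (m - 1) := by
          have h1' : (f m : ℝ) ≤ (ε : ℝ) / (4 * ν) * f (m + 1)
              + 2 * ν * ((ε : ℝ) / (4 * ν))⁻¹ * f (m - 1) := by exact_mod_cast h1
          have hrw : (2 : ℝ) * ν * ((ε : ℝ) / (4 * ν))⁻¹ = 8 * (ν : ℝ) ^ 2 * (ε : ℝ)⁻¹ := by
            rw [inv_div]
            field_simp
            ring
          rwa [hrw] at h1'
        have H2 : (f (m - 1) : ℝ) ≤ (ε : ℝ) / (16 * ν ^ 2) * f m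
            + ((C : ℝ) * ((16 * (ν : ℝ) ^ 2) ^ (m - 1) * ((ε : ℝ)⁻¹) ^ (m - 1))) * f 0 := by
          have h2' : (f (m - 1) : ℝ) ≤ (ε : ℝ) / (16 * ν ^ 2) * f m
              + (C : ℝ) * (((ε : ℝ) / (16 * ν ^ 2))⁻¹) ^ (m - 1) * f 0 := by exact_mod_cast h2
          have hrw : (((ε : ℝ) / (16 * ν ^ 2))⁻¹) ^ (m - 1)
              = (16 * (ν : ℝ) ^ 2) ^ (m - 1) * ((ε : ℝ)⁻¹) ^ (m - 1) := by
            rw [inv_div, div_pow, div_eq_mul_inv, ← inv_pow]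
          rw [hrw] at h2'
          calc (f (m - 1) : ℝ) ≤ _ := h2'
            _ = _ := by ring
        have hreal := stmt0_aux (ε : ℝ) (ν : ℝ) (C : ℝ)
          ((16 * (ν : ℝ) ^ 2) ^ (m - 1)) (((ε : ℝ)⁻¹) ^ (m - 1))
          (f m) (f (m + 1)) (f (m - 1)) (f 0)
          (by exact_mod_cast hε) (by exact_mod_cast hν)
          C.coe_nonneg (by positivity) (by positivity)
          (f (m + 1)).coe_nonneg (f 0).coe_nonneg H1 H2
        have hpow : ((ε : ℝ)⁻¹) ^ m = (ε : ℝ)⁻¹ * ((ε : ℝ)⁻¹) ^ (m - 1) := by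
          conv_lhs => rw [show m = 1 + (m - 1) by omega]
          rw [pow_add, pow_one]
        have goalR : (f m : ℝ) ≤ 2 * ε * f (m + 1) + 2 * K * ((ε : ℝ)⁻¹) ^ m * f 0 := by
          have hKR : (K : ℝ) = 8 * (ν : ℝ) ^ 2 * C * (16 * (ν : ℝ) ^ 2) ^ (m - 1) := by
            rw [hK]; push_cast; ring
          rw [hpow, hKR]
          calc (f m : ℝ) ≤ _ := hreal
            _ = _ := by ring
        exact_mod_cast goalR
      -- Sublemma B
      set D : ℝ≥0 := 2 ^ (m + 1) * K with hD
      have hDpos : 0 < D := by positivity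
      have subB : ∀ ε : ℝ≥0, 0 < ε → ε ≤ 1 →
          f m ≤ ε * f (m + 1) + D * (ε⁻¹) ^ m * f 0 := by
        intro ε hε hε1
        have h := subA (ε / 2) (by positivity) (le_trans (div_le_self zero_le (by norm_num)) hε1)
        have e1 : 2 * (ε / 2) = ε := by
          rw [mul_div_assoc']; rw [mul_comm]; exact mul_div_cancel_right₀ ε two_ne_zero
        have e2 : ((ε / 2)⁻¹ : ℝ≥0) ^ m = 2 ^ m * (ε⁻¹) ^ m := by
          rw [inv_div, div_pow, div_eq_mul_inv, ← inv_pow]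
        rw [e1, e2] at h
        calc f m ≤ ε * f (m + 1) + 2 * K * (2 ^ m * (ε⁻¹) ^ m) * f 0 := h
          _ = ε * f (m + 1) + D * (ε⁻¹) ^ m * f 0 := by
              rw [hD]; ring
      refine ⟨C + D, by positivity, ?_⟩
      intro ℓ hℓ ε hε hε1
      rcases eq_or_lt_of_le (show ℓ ≤ m by omega) with rfl | hlt
      · -- ℓ = m
        rw [show ℓ + 1 - ℓ = 1 by omega, pow_one]
        calc f ℓ ≤ ε * f (ℓ + 1) + D * (ε⁻¹) ^ ℓ * f 0 := subB ε hε hε1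
          _ ≤ ε * f (ℓ + 1) + (C + D) * (ε⁻¹) ^ ℓ * f 0 := by
              gcongr
              exact le_add_self
      · -- ℓ ≤ m - 1
        have hℓ' : ℓ ≤ m - 1 := by omega
        have key : ε ^ (m - ℓ) * (ε⁻¹) ^ m = (ε⁻¹) ^ ℓ := by
          rw [inv_pow, inv_pow, pow_sub₀ ε hε.ne' (by omega : ℓ ≤ m)]
          field_simp
        have e1 : ε ^ (m - ℓ) * ε = ε ^ (m + 1 - ℓ) := by
          rw [← pow_succ, show m - ℓ + 1 = m + 1 - ℓ by omega]
        calc f ℓ ≤ ε ^ (m - ℓ) * f m + C * (ε⁻¹) ^ ℓ * f 0 := hIH ℓ hℓ' ε hε hε1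
          _ ≤ ε ^ (m - ℓ) * (ε * f (m + 1) + D * (ε⁻¹) ^ m * f 0) + C * (ε⁻¹) ^ ℓ * f 0 := by
              gcongr
              exact subB ε hε hε1
          _ = ε ^ (m + 1 - ℓ) * f (m + 1)
              + D * (ε ^ (m - ℓ) * (ε⁻¹) ^ m) * f 0 + C * (ε⁻¹) ^ ℓ * f 0 := by
              rw [← e1]; ring
          _ = ε ^ (m + 1 - ℓ) * f (m + 1) + (C + D) * (ε⁻¹) ^ ℓ * f 0 := by
              rw [key]; ring
end

section
/- Let E, F be normed spaces, D ⊆ E a subspace, and P, P_m, P_{<m} : D → F linear with P = P_m + P_{<m}. Let S : D → ℝ≥0 satisfy S(α) ≥ ‖α‖_E for α ∈ D (S plays the role of Σ_{ℓ≤m}|α|_{ℓ,p}). Assume: (a) the maximal estimate S(α) ≤ C(‖Pα‖ + ‖α‖) for all α ∈ D, and (b) for every ε ∈ (0,1] there is C_ε with ‖P_{<m} α‖ ≤ ε·S(α) + C_ε‖α‖ for all α ∈ D. Then there exists C' such that ‖Pα‖ ≤ C'(‖P_m α‖ + ‖α‖) for all α ∈ D; moreover if instead the maximal estimate (a) holds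 for P_m, then ‖P_m α‖ ≤ C''(‖Pα‖ + ‖α‖) for all α ∈ D. Consequently, P satisfies the maximal estimate if and only if P_m does. -/
/-- Key absorption lemma: if `S` dominates the norm, the perturbation `T` is
controlled by `ε S + C_ε ‖·‖`, `‖A α‖ ≤ ‖B α‖ + ‖T α‖`, and `S` satisfies the
maximal estimate relative to `A`, then `‖A α‖ ≲ ‖B α‖ + ‖α‖`. -/
lemma stmt11_key {E F : Type*} [NormedAddCommGroup E] [NormedSpace ℝ E]
    [NormedAddCommGroup F] [NormedSpace ℝ F] {D : Subspace ℝ E}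
    (A B T : D →ₗ[ℝ] F)
    (S : D → ℝ) (hS : ∀ α : D, ‖α‖ ≤ S α)
    (hb : ∀ ε : ℝ, 0 < ε → ε ≤ 1 → ∃ Cε : ℝ, 0 < Cε ∧
      ∀ α : D, ‖T α‖ ≤ ε * S α + Cε * ‖α‖)
    (hAB : ∀ α : D, ‖A α‖ ≤ ‖B α‖ + ‖T α‖)
    (hmax : ∃ C : ℝ, 0 < C ∧ ∀ α : D, S α ≤ C * (‖A α‖ + ‖α‖)) :
    ∃ C' : ℝ, 0 < C' ∧ ∀ α : D, ‖A α‖ ≤ C' * (‖B α‖ + ‖α‖) := by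
  obtain ⟨C, hC, hCle⟩ := hmax
  set ε : ℝ := min (1 / (2 * C)) 1 with hε
  have hεpos : 0 < ε := lt_min (by positivity) one_pos
  have hεC : ε * C ≤ 1 / 2 := by
    have h1 : ε ≤ 1 / (2 * C) := min_le_left _ _
    have := mul_le_mul_of_nonneg_right h1 hC.le
    calc ε * C ≤ (1 / (2 * C)) * C := this
      _ = 1 / 2 := by field_simp
  obtain ⟨Cε, hCεpos, hCε⟩ := hb ε hεpos (min_le_right _ _)
  refine ⟨2 + 2 * Cε, by positivity, fun α => ?_⟩
  have h1 := hAB α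
  have h2 := hCε α
  have h3 := hCle α
  have h4 : ε * S α ≤ ε * (C * (‖A α‖ + ‖α‖)) :=
    mul_le_mul_of_nonneg_left h3 hεpos.le
  have hA0 : (0:ℝ) ≤ ‖A α‖ := norm_nonneg _
  have hB0 : (0:ℝ) ≤ ‖B α‖ := norm_nonneg _
  have hα0 : (0:ℝ) ≤ ‖α‖ := norm_nonneg _
  nlinarith [mul_nonneg hεpos.le hα0, mul_nonneg hεpos.le hA0]

/-- Abstract formulation of Proposition 2.2: `P = P_m + P_{<m}` on a subspace
`D`, `S` a Sobolev-type quantity dominating the norm, with the perturbation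
`P_{<m}` controlled by `ε S(α) + C_ε ‖α‖`. Then the maximal estimate for `P`
implies `‖Pα‖ ≲ ‖P_m α‖ + ‖α‖`, the maximal estimate for `P_m` implies
`‖P_m α‖ ≲ ‖Pα‖ + ‖α‖`, and `P` satisfies the maximal estimate iff `P_m`
does. -/
theorem stmt11 {E F : Type*} [NormedAddCommGroup E] [NormedSpace ℝ E]
    [NormedAddCommGroup F] [NormedSpace ℝ F]
    (D : Subspace ℝ E) (P Pm Plt : D →ₗ[ℝ] F) (hsum : P = Pm + Plt)
    (S : D → ℝ) (hS : ∀ α : D, ‖α‖ ≤ S α)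
    (hb : ∀ ε : ℝ, 0 < ε → ε ≤ 1 → ∃ Cε : ℝ, 0 < Cε ∧
      ∀ α : D, ‖Plt α‖ ≤ ε * S α + Cε * ‖α‖) :
    ((∃ C : ℝ, 0 < C ∧ ∀ α : D, S α ≤ C * (‖P α‖ + ‖α‖)) →
      ∃ C' : ℝ, 0 < C' ∧ ∀ α : D, ‖P α‖ ≤ C' * (‖Pm α‖ + ‖α‖)) ∧
    ((∃ C : ℝ, 0 < C ∧ ∀ α : D, S α ≤ C * (‖Pm α‖ + ‖α‖)) →
      ∃ C'' : ℝ, 0 < C'' ∧ ∀ α : D, ‖Pm α‖ ≤ C'' * (‖P α‖ + ‖α‖)) ∧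
    ((∃ C : ℝ, 0 < C ∧ ∀ α : D, S α ≤ C * (‖P α‖ + ‖α‖)) ↔
      (∃ C : ℝ, 0 < C ∧ ∀ α : D, S α ≤ C * (‖Pm α‖ + ‖α‖))) := by
  have hPPm : ∀ α : D, ‖P α‖ ≤ ‖Pm α‖ + ‖Plt α‖ := by
    intro α
    have h : P α = Pm α + Plt α := by rw [hsum]; rfl
    rw [h]; exact norm_add_le _ _
  have hPmP : ∀ α : D, ‖Pm α‖ ≤ ‖P α‖ + ‖Plt α‖ := by
    intro α
    have h : Pm α = P α - Plt α := by rw [hsum]; simp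
    rw [h]; exact norm_sub_le _ _
  have part1 := fun h => stmt11_key P Pm Plt S hS hb hPPm h
  have part2 := fun h => stmt11_key Pm P Plt S hS hb hPmP h
  refine ⟨part1, part2, ?_, ?_⟩
  · rintro ⟨C, hC, hCle⟩
    obtain ⟨C', hC', hC'le⟩ := part1 ⟨C, hC, hCle⟩
    refine ⟨C * (C' + 1), by positivity, fun α => ?_⟩
    have h1 := hCle α
    have h2 := hC'le α
    have hα0 : (0:ℝ) ≤ ‖α‖ := norm_nonneg _
    have hB0 : (0:ℝ) ≤ ‖Pm α‖ := norm_nonneg _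
    nlinarith
  · rintro ⟨C, hC, hCle⟩
    obtain ⟨C', hC', hC'le⟩ := part2 ⟨C, hC, hCle⟩
    refine ⟨C * (C' + 1), by positivity, fun α => ?_⟩
    have h1 := hCle α
    have h2 := hC'le α
    have hα0 : (0:ℝ) ≤ ‖α‖ := norm_nonneg _
    have hB0 : (0:ℝ) ≤ ‖P α‖ := norm_nonneg _
    nlinarith
end
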